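/- arXiv:2305.17203 — 3 statements merged into one kernel-verified Lean document; each statement's English description precedes it below -/
import Mathlib

section
/- Let v : ℝ → ℝⁿ be a function of bounded variation that is right-continuous, and let x ∈ ℝ. Suppose that for every ε > 0 there exist u₀ ∈ ℝⁿ and r₀ > 0 such that (1/r)∫_{x−r}^{x+r} |v(y) − u₀| dy ≤ ε for all 0 < r ≤ r₀. Then v is continuous at x, i.e. the left and right limits of v at x coincide and equal v(x). -/
open MeasureTheory Set Filter Topology


lemma bv_measurable {n : ℕ} {v : ℝ → EuclideanSpace ℝ (Fin n)}
    (hBV : eVariationOn v univ ≠ ⊤) : Measurable v := by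
  have hloc : LocallyBoundedVariationOn v univ :=
    BoundedVariationOn.locallyBoundedVariationOn hBV
  suffices hm : Measurable (fun t => WithLp.ofLp (v t)) from
    (WithLp.measurable_toLp 2 _).comp hm
  apply measurable_pi_iff.2
  intro i
  have h1 : LocallyBoundedVariationOn (fun t => v t i) univ :=
    ((EuclideanSpace.proj (𝕜 := ℝ) i).lipschitz).comp_locallyBoundedVariationOn hloc
  obtain ⟨p, q, hp, hq, hpq⟩ := h1.exists_monotoneOn_sub_monotoneOn
  have : (fun t => v t i) = fun t => p t - q t := by rw [hpq]; rfl
  rw [this]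
  exact ((monotoneOn_univ.1 hp).measurable).sub ((monotoneOn_univ.1 hq).measurable)


lemma bv_left_lim {n : ℕ} {v : ℝ → EuclideanSpace ℝ (Fin n)}
    (hBV : eVariationOn v univ ≠ ⊤) (x : ℝ) :
    ∃ L, Tendsto v (𝓝[<] x) (𝓝 L) := by
  have hloc : LocallyBoundedVariationOn v univ :=
    BoundedVariationOn.locallyBoundedVariationOn hBV
  set V : ℝ → ℝ := variationOnFromTo v univ x with hV
  have hVmono : Monotone V :=
    monotoneOn_univ.1 (variationOnFromTo.monotoneOn hloc (mem_univ x))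
  have hVtend := hVmono.tendsto_nhdsLT x
  set ℓ := sSup (V '' Iio x) with hℓ
  have key : ∀ a b : ℝ, a ≤ b → dist (v a) (v b) ≤ V b - V a := by
    intro a b hab
    have h1 : BoundedVariationOn v (univ ∩ Icc a b) :=
      BoundedVariationOn.mono hBV inter_subset_left
    have h2 : dist (v a) (v b) ≤ (eVariationOn v (univ ∩ Icc a b)).toReal :=
      h1.dist_le ⟨mem_univ a, left_mem_Icc.2 hab⟩ ⟨mem_univ b, right_mem_Icc.2 hab⟩
    have h3 : variationOnFromTo v univ a b = (eVariationOn v (univ ∩ Icc a b)).toReal :=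
      variationOnFromTo.eq_of_le v univ hab
    have h4 := variationOnFromTo.add hloc (mem_univ x) (mem_univ a) (mem_univ b)
    have : variationOnFromTo v univ a b = V b - V a := by
      simp only [hV]; linarith
    linarith
  have key2 : ∀ a b : ℝ, dist (v a) (v b) ≤ dist (V a) (V b) := by
    intro a b
    rcases le_total a b with hab | hab
    · rw [Real.dist_eq, abs_sub_comm, abs_of_nonneg (by linarith [hVmono hab])]
      exact key a b hab
    · rw [dist_comm, Real.dist_eq, abs_of_nonneg (by linarith [hVmono hab])]
      exact key b a hab
  have hC : Cauchy (map v (𝓝[<] x)) := by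
    rw [Metric.cauchy_iff]
    refine ⟨map_neBot, fun ε hε => ?_⟩
    have h2 : ∀ᶠ a in 𝓝[<] x, dist (V a) ℓ < ε / 2 :=
      Metric.tendsto_nhds.1 hVtend (ε / 2) (half_pos hε)
    refine ⟨v '' {a | dist (V a) ℓ < ε / 2}, mem_map.2 (mem_of_superset h2 (subset_preimage_image v _)), ?_⟩
    rintro _ ⟨a, ha, rfl⟩ _ ⟨b, hb, rfl⟩
    calc dist (v a) (v b) ≤ dist (V a) (V b) := key2 a b
      _ ≤ dist (V a) ℓ + dist (V b) ℓ := dist_triangle_right _ _ _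
      _ < ε / 2 + ε / 2 := add_lt_add ha hb
      _ = ε := add_halves ε
  obtain ⟨L, hL⟩ := CompleteSpace.complete hC
  exact ⟨L, hL⟩


lemma bv_left_lim_eq (n : ℕ) (v : ℝ → EuclideanSpace ℝ (Fin n)) (hm : Measurable v)
    (hBV : eVariationOn v univ ≠ ⊤)
    (hrc : ∀ z : ℝ, Tendsto v (𝓝[>] z) (𝓝 (v z))) (x : ℝ)
    (h : ∀ ε > (0:ℝ), ∃ (u₀ : EuclideanSpace ℝ (Fin n)) (r₀ : ℝ), 0 < r₀ ∧
      ∀ r, 0 < r → r ≤ r₀ → (1/r) * ∫ y in x - r..x + r, ‖v y - u₀‖ ≤ ε)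
    (L : EuclideanSpace ℝ (Fin n)) (hL : Tendsto v (𝓝[<] x) (𝓝 L)) :
    L = v x := by
  by_contra hne
  set δ := ‖L - v x‖ with hδdef
  have hδpos : 0 < δ := norm_sub_pos_iff.2 hne
  obtain ⟨u₀, r₀, hr₀, hbound⟩ := h (δ/4) (by positivity)
  have h1 : ∀ᶠ y in 𝓝[<] x, dist (v y) L < δ/8 :=
    Metric.tendsto_nhds.1 hL _ (by positivity)
  obtain ⟨a, hax, ha⟩ := mem_nhdsLT_iff_exists_Ioo_subset.1 h1
  have h2 : ∀ᶠ y in 𝓝[>] x, dist (v y) (v x) < δ/8 :=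
    Metric.tendsto_nhds.1 (hrc x) _ (by positivity)
  obtain ⟨b, hbx, hb⟩ := mem_nhdsGT_iff_exists_Ioo_subset.1 h2
  have hax' : a < x := hax
  have hbx' : x < b := hbx
  set r := min r₀ (min (x - a) (b - x)) with hrdef
  have hrpos : 0 < r := by
    apply lt_min hr₀ (lt_min (by linarith) (by linarith))
  have hrr₀ : r ≤ r₀ := min_le_left _ _
  have hra : a ≤ x - r := by
    have : r ≤ x - a := le_trans (min_le_right _ _) (min_le_left _ _)
    linarith
  have hrb : x + r ≤ b := by
    have : r ≤ b - x := le_trans (min_le_right _ _) (min_le_right _ _)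
    linarith
  -- integrability
  set f : ℝ → ℝ := fun y => ‖v y - u₀‖ with hfdef
  have hmeas : Measurable f := (hm.sub measurable_const).norm
  set M : ℝ := (eVariationOn v univ).toReal + ‖v x - u₀‖ with hMdef
  have hfM : ∀ y, f y ≤ M := by
    intro y
    have h3 : dist (v y) (v x) ≤ (eVariationOn v univ).toReal :=
      BoundedVariationOn.dist_le hBV (mem_univ y) (mem_univ x)
    calc f y = ‖(v y - v x) + (v x - u₀)‖ := by rw [hfdef, sub_add_sub_cancel]
      _ ≤ ‖v y - v x‖ + ‖v x - u₀‖ := norm_add_le _ _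
      _ ≤ M := by rw [hMdef, ← dist_eq_norm]; linarith
  have hintOn : ∀ s : Set ℝ, MeasurableSet s → volume s < ⊤ → IntegrableOn f s volume := by
    intro s hs hsv
    refine Integrable.mono' ((integrableOn_const hsv.ne : IntegrableOn (fun _ => M) s volume))
      hmeas.aestronglyMeasurable.restrict (ae_of_all _ fun y => ?_)
    rw [Real.norm_of_nonneg (norm_nonneg _)]
    exact hfM y
  have hii : ∀ c d : ℝ, IntervalIntegrable f volume c d := by
    intro c d
    rw [intervalIntegrable_iff]
    exact hintOn _ measurableSet_Ioc measure_Ioc_lt_top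
  -- lower bounds
  set c₁ : ℝ := ‖L - u₀‖ - δ/8 with hc₁
  set c₂ : ℝ := ‖v x - u₀‖ - δ/8 with hc₂
  have hIoo1 : r * c₁ ≤ ∫ y in x - r..x, f y := by
    rw [intervalIntegral.integral_of_le (by linarith), integral_Ioc_eq_integral_Ioo]
    have : r * c₁ = ∫ _ in Ioo (x - r) x, c₁ := by
      rw [setIntegral_const, Real.volume_real_Ioo_of_le (by linarith), smul_eq_mul]
      ring_nf
    rw [this]
    refine setIntegral_mono_on (integrableOn_const (by rw [Real.volume_Ioo]; exact ENNReal.ofReal_ne_top))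
      ((hintOn _ measurableSet_Ioo (by rw [Real.volume_Ioo]; exact ENNReal.ofReal_lt_top)))
      measurableSet_Ioo (fun y hy => ?_)
    have hy' : y ∈ Ioo a x := ⟨by linarith [hy.1], hy.2⟩
    have hdy : dist (v y) L < δ/8 := ha hy'
    have htri : ‖L - u₀‖ ≤ ‖L - v y‖ + ‖v y - u₀‖ := by
      calc ‖L - u₀‖ = ‖(L - v y) + (v y - u₀)‖ := by rw [sub_add_sub_cancel]
        _ ≤ _ := norm_add_le _ _
    rw [dist_eq_norm, ← norm_sub_rev] at hdy
    simp only [hfdef, hc₁]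
    linarith
  have hIoo2 : r * c₂ ≤ ∫ y in x..x + r, f y := by
    rw [intervalIntegral.integral_of_le (by linarith), integral_Ioc_eq_integral_Ioo]
    have : r * c₂ = ∫ _ in Ioo x (x + r), c₂ := by
      rw [setIntegral_const, Real.volume_real_Ioo_of_le (by linarith), smul_eq_mul]
      ring_nf
    rw [this]
    refine setIntegral_mono_on (integrableOn_const (by rw [Real.volume_Ioo]; exact ENNReal.ofReal_ne_top))
      ((hintOn _ measurableSet_Ioo (by rw [Real.volume_Ioo]; exact ENNReal.ofReal_lt_top)))
      measurableSet_Ioo (fun y hy => ?_)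
    have hy' : y ∈ Ioo x b := ⟨hy.1, by linarith [hy.2]⟩
    have hdy : dist (v y) (v x) < δ/8 := hb hy'
    have htri : ‖v x - u₀‖ ≤ ‖v x - v y‖ + ‖v y - u₀‖ := by
      calc ‖v x - u₀‖ = ‖(v x - v y) + (v y - u₀)‖ := by rw [sub_add_sub_cancel]
        _ ≤ _ := norm_add_le _ _
    rw [dist_eq_norm, ← norm_sub_rev] at hdy
    simp only [hfdef, hc₂]
    linarith
  have hsplit : (∫ y in x - r..x, f y) + ∫ y in x..x + r, f y = ∫ y in x - r..x + r, f y :=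
    intervalIntegral.integral_add_adjacent_intervals (hii _ _) (hii _ _)
  have hlow : r * (c₁ + c₂) ≤ ∫ y in x - r..x + r, f y := by
    rw [← hsplit]; linarith
  have hub := hbound r hrpos hrr₀
  have htri2 : δ ≤ ‖L - u₀‖ + ‖v x - u₀‖ := by
    calc δ = ‖(L - u₀) - (v x - u₀)‖ := by rw [hδdef, sub_sub_sub_cancel_right]
      _ ≤ ‖L - u₀‖ + ‖v x - u₀‖ := norm_sub_le _ _
  have hc12 : 3*δ/4 ≤ c₁ + c₂ := by rw [hc₁, hc₂]; linarith
  have hfinal : 3*δ/4 ≤ (1/r) * ∫ y in x - r..x + r, f y := by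
    have h5 : r * (3*δ/4) ≤ ∫ y in x - r..x + r, f y := le_trans (by nlinarith) hlow
    calc 3*δ/4 = (1/r) * (r * (3*δ/4)) := by field_simp
      _ ≤ _ := mul_le_mul_of_nonneg_left h5 (le_of_lt (one_div_pos.2 hrpos))
  linarith

/-- A right-continuous BV function which is approximately continuous (in the averaged
L¹ sense) at a point is continuous there. -/
theorem stmt3 (n : ℕ) (v : ℝ → EuclideanSpace ℝ (Fin n))
    (hBV : eVariationOn v univ ≠ ⊤)
    (hrc : ∀ z : ℝ, Tendsto v (𝓝[>] z) (𝓝 (v z))) (x : ℝ)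
    (h : ∀ ε > (0:ℝ), ∃ (u₀ : EuclideanSpace ℝ (Fin n)) (r₀ : ℝ), 0 < r₀ ∧
      ∀ r, 0 < r → r ≤ r₀ → (1/r) * ∫ y in x - r..x + r, ‖v y - u₀‖ ≤ ε) :
    ContinuousAt v x := by
  obtain ⟨L, hL⟩ := bv_left_lim hBV x
  have hLx : L = v x :=
    bv_left_lim_eq n v (bv_measurable hBV) hBV hrc x h L hL
  have hleft : Tendsto v (𝓝[<] x) (𝓝 (v x)) := hLx ▸ hL
  have hright : Tendsto v (𝓝[≥] x) (𝓝 (v x)) := by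
    have hIci : Ici x = insert x (Ioi x) := Set.Ioi_insert.symm
    rw [hIci, nhdsWithin_insert]
    exact tendsto_sup.2 ⟨tendsto_pure_nhds v x, hrc x⟩
  unfold ContinuousAt
  rw [← nhdsWithin_univ, ← Set.Iio_union_Ici, nhdsWithin_union]
  exact tendsto_sup.2 ⟨hleft, hright⟩
end

section
/- Let u be a weak solution of u_t + f(u)_x = 0 on (0,T) × ℝ with u ∈ L^∞, i.e. ∫∫ (u φ_t + f(u) φ_x) dx dt = 0 for all φ ∈ C¹_c((0,T) × ℝ). Suppose (τ,ξ) ∈ (0,T) × ℝ is a point of approximate jump: there exist u⁻, u⁺ ∈ ℝⁿ and λ ∈ ℝ such that, with U(t,x) = u⁻ for x < λt and U(t,x) = u⁺ for x > λt, one has lim_{r↓0} r^{−2} ∫_{−r}^{r}∫_{−r}^{r} |u(τ+t, ξ+x) − U(t,x)| dx dt = 0. Then the Rankine–Hugoniot condition holds: f(u⁺) − f(u⁻) = λ(u⁺ − u⁻). -/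
set_option maxHeartbeats 4000000

open MeasureTheory Set Filter Topology

section helpers

lemma shift_setIntegral {E : Type*} [NormedAddCommGroup E] [NormedSpace ℝ E]
    (F : ℝ → E) (c : ℝ) (s : Set ℝ) :
    ∫ x in s, F x = ∫ x in (fun x => x + c) ⁻¹' s, F (x + c) :=
  ((measurePreserving_add_right volume c).setIntegral_preimage_emb
    (MeasurableEquiv.addRight c).measurableEmbedding F s).symm

lemma integrableOn_of_bdd {E : Type*} [NormedAddCommGroup E] {F : ℝ × ℝ → E}
    (hm : AEStronglyMeasurable F (volume : Measure (ℝ × ℝ)))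
    {s : Set (ℝ × ℝ)} (hs : volume s ≠ ⊤)
    {C : ℝ} (hC : ∀ x, ‖F x‖ ≤ C) : IntegrableOn F s := by
  have : IsFiniteMeasure ((volume : Measure (ℝ × ℝ)).restrict s) :=
    ⟨by rw [Measure.restrict_apply_univ]; exact lt_top_iff_ne_top.2 hs⟩
  exact ⟨hm.restrict, HasFiniteIntegral.of_bounded (C := C) (ae_of_all _ hC)⟩

lemma integrable_of_bdd_supp {α E : Type*} [MeasurableSpace α] {μ : Measure α}
    [NormedAddCommGroup E] {F : α → E} (hm : AEStronglyMeasurable F μ)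
    {s : Set α} (hsm : MeasurableSet s) (hs : μ s ≠ ⊤)
    (h0 : ∀ x, x ∉ s → F x = 0) {C : ℝ} (hC : ∀ x, ‖F x‖ ≤ C) : Integrable F μ := by
  have hFi : F = s.indicator F := by
    ext x; by_cases hx : x ∈ s
    · simp [hx]
    · simp [hx, h0 x hx]
  rw [hFi, integrable_indicator_iff hsm]
  have : IsFiniteMeasure (μ.restrict s) :=
    ⟨by rw [Measure.restrict_apply_univ]; exact lt_top_iff_ne_top.2 hs⟩
  exact ⟨hm.restrict, HasFiniteIntegral.of_bounded (C := C) (ae_of_all _ hC)⟩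

variable (h : ContDiffBump (0:ℝ)) {r : ℝ}

lemma bump_zero_of_out {y : ℝ} (hy : h.rOut ≤ |y|) : h y = 0 := by
  apply Function.notMem_support.1
  rw [h.support_eq]
  simp only [Metric.mem_ball, Real.dist_eq, sub_zero, not_lt]
  exact hy

lemma bump_deriv_zero_of_out {y : ℝ} (hy : h.rOut < |y|) : deriv (⇑h) y = 0 := by
  apply Function.notMem_support.1
  intro hmem
  have := support_deriv_subset hmem
  rw [h.tsupport_eq] at this
  simp only [Metric.mem_closedBall, Real.dist_eq, sub_zero] at this
  linarith

lemma bump_scaled_deriv (hr : 0 < r) (x : ℝ) :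
    HasDerivAt (fun x => r * h (x / r)) (deriv (⇑h) (x / r)) x := by
  have hd : HasDerivAt (⇑h) (deriv (⇑h) (x / r)) (x / r) :=
    (((h.contDiff (n := 1)).differentiable (by norm_num)) (x / r)).hasDerivAt
  have h1 : HasDerivAt (fun x : ℝ => x / r) (1 / r) x := by
    simpa using (hasDerivAt_id x).div_const r
  have h2 := (hd.comp x h1).const_mul r
  convert h2 using 1
  case e'_9 => field_simp
  all_goals rfl

lemma bump_scaled_int (hr : 0 < r) {s : Set ℝ} :
    IntegrableOn (fun x : ℝ => deriv (⇑h) (x / r)) s := by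
  have hcont : Continuous fun x : ℝ => deriv (⇑h) (x / r) :=
    (h.contDiff (n := 1)).continuous_deriv le_rfl |>.comp (continuous_id.div_const r)
  have hcs : HasCompactSupport fun x : ℝ => deriv (⇑h) (x / r) := by
    have := (h.hasCompactSupport.deriv).comp_homeomorph
      (Homeomorph.mulRight₀ r⁻¹ (inv_ne_zero hr.ne'))
    simpa [div_eq_mul_inv, Function.comp_def] using this
  exact (hcont.integrable_of_hasCompactSupport hcs).integrableOn

lemma bump_scaled_tendsto_bot (hr : 0 < r) :
    Tendsto (fun x => r * h (x / r)) atBot (𝓝 0) := by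
  have : (fun x : ℝ => r * h (x / r)) =ᶠ[atBot] fun _ => 0 := by
    filter_upwards [Iic_mem_atBot (-(r * h.rOut))] with x hx
    have hx' : h.rOut ≤ |x| / r := by
      rw [le_div_iff₀ hr]
      have hx'' : x ≤ -(r * h.rOut) := hx
      have h2 : -x ≤ |x| := neg_le_abs x
      nlinarith
    have hx2 : h.rOut ≤ |x / r| := by rwa [abs_div, abs_of_pos hr]
    rw [bump_zero_of_out h hx2, mul_zero]
  exact Tendsto.congr' this.symm tendsto_const_nhds

lemma bump_scaled_tendsto_top (hr : 0 < r) :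
    Tendsto (fun x => r * h (x / r)) atTop (𝓝 0) := by
  have : (fun x : ℝ => r * h (x / r)) =ᶠ[atTop] fun _ => 0 := by
    filter_upwards [Ici_mem_atTop (r * h.rOut)] with x hx
    have hx'' : r * h.rOut ≤ x := hx
    have h2 : x ≤ |x| := le_abs_self x
    have hx' : h.rOut ≤ |x / r| := by
      rw [abs_div, abs_of_pos hr, le_div_iff₀ hr]
      nlinarith
    rw [bump_zero_of_out h hx', mul_zero]
  exact Tendsto.congr' this.symm tendsto_const_nhds

lemma integral_Iic_deriv_bump (hr : 0 < r) :
    ∫ x in Iic (0:ℝ), deriv (⇑h) (x / r) = r := by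
  have := integral_Iic_of_hasDerivAt_of_tendsto' (f := fun x => r * h (x / r))
    (f' := fun x => deriv (⇑h) (x / r)) (a := (0:ℝ)) (m := 0)
    (fun x _ => bump_scaled_deriv h hr x) (bump_scaled_int h hr) (bump_scaled_tendsto_bot h hr)
  simpa [h.one_of_mem_closedBall (Metric.mem_closedBall_self h.rIn_pos.le)] using this

lemma integral_Ioi_deriv_bump (hr : 0 < r) :
    ∫ x in Ioi (0:ℝ), deriv (⇑h) (x / r) = -r := by
  have := integral_Ioi_of_hasDerivAt_of_tendsto' (f := fun x => r * h (x / r))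
    (f' := fun x => deriv (⇑h) (x / r)) (a := (0:ℝ)) (m := 0)
    (fun x _ => bump_scaled_deriv h hr x) (bump_scaled_int h hr) (bump_scaled_tendsto_top h hr)
  simpa [h.one_of_mem_closedBall (Metric.mem_closedBall_self h.rIn_pos.le)] using this

lemma integral_Iio_deriv_bump (hr : 0 < r) :
    ∫ x in Iio (0:ℝ), deriv (⇑h) (x / r) = r := by
  rw [setIntegral_congr_set Iio_ae_eq_Iic, integral_Iic_deriv_bump h hr]

lemma integral_Ici_deriv_bump (hr : 0 < r) :
    ∫ x in Ici (0:ℝ), deriv (⇑h) (x / r) = -r := by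
  rw [setIntegral_congr_set Ioi_ae_eq_Ici.symm, integral_Ioi_deriv_bump h hr]

lemma integral_deriv_bump_shift (hr : 0 < r) (c : ℝ) :
    ∫ x : ℝ, deriv (⇑h) ((x - c) / r) = 0 := by
  have h1 := integral_sub_right_eq_self (μ := volume) (fun s => deriv (⇑h) (s / r)) c
  rw [h1, ← intervalIntegral.integral_Iic_add_Ioi ((bump_scaled_int h hr (s := Iic 0)))
    ((bump_scaled_int h hr (s := Ioi 0))),
    integral_Iic_deriv_bump h hr, integral_Ioi_deriv_bump h hr]
  ring

lemma integral_bump_shift (hr : 0 < r) (c : ℝ) :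
    ∫ x : ℝ, h ((x - c) / r) = r * ∫ x, h x := by
  have h1 := integral_sub_right_eq_self (μ := volume) (fun s => h (s / r)) c
  rw [h1, MeasureTheory.Measure.integral_comp_div (⇑h) r, abs_of_pos hr]
  simp

end helpers

/-- At an approximate jump point of a bounded weak solution of u_t + f(u)_x = 0, the
Rankine–Hugoniot condition holds. -/
theorem stmt9 (n : ℕ) (T : ℝ) (hT : 0 < T)
    (f : EuclideanSpace ℝ (Fin n) → EuclideanSpace ℝ (Fin n)) (hf : Continuous f)
    (u : ℝ × ℝ → EuclideanSpace ℝ (Fin n)) (hmeas : Measurable u)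
    (K : ℝ) (hbd : ∀ p, ‖u p‖ ≤ K)
    (hweak : ∀ φ : ℝ × ℝ → ℝ, ContDiff ℝ 1 φ → HasCompactSupport φ →
      tsupport φ ⊆ Ioo 0 T ×ˢ (univ : Set ℝ) →
      ∫ p : ℝ × ℝ, ((deriv (fun s => φ (s, p.2)) p.1) • u p
        + (deriv (fun y => φ (p.1, y)) p.2) • f (u p)) = 0)
    (τ ξ l : ℝ) (hτ : τ ∈ Ioo 0 T)
    (um up : EuclideanSpace ℝ (Fin n))
    (hjump : Tendsto (fun r : ℝ =>
        (r^2)⁻¹ * ∫ t in -r..r, ∫ x in -r..r,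
          ‖u (τ + t, ξ + x) - (if x < l * t then um else up)‖)
      (𝓝[>] 0) (𝓝 0)) :
    f up - f um = l • (up - um) := by
  classical
  have hK0 : (0:ℝ) ≤ K := le_trans (norm_nonneg _) (hbd (0, 0))
  -- bump functions
  set δ : ℝ := (2 + 2 * |l|)⁻¹ with hδdef
  have hδpos : 0 < δ := by positivity
  have hδlt1 : δ < 1 := by
    rw [hδdef]
    rw [inv_lt_one_iff₀]
    right; linarith [abs_nonneg l]
  have hgeom : (1 + 2 * |l|) * δ < 1 := by
    rw [hδdef, mul_inv_lt_iff₀ (by positivity)]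
    linarith [abs_nonneg l]
  set cc : ℝ := 1 + |l| with hccdef
  have hccpos : 0 < cc := by positivity
  let g : ContDiffBump (0:ℝ) := ⟨δ/2, δ, by positivity, by linarith⟩
  let h : ContDiffBump (0:ℝ) := ⟨cc*δ/2, cc*δ, by positivity, by nlinarith⟩
  have hgOut : g.rOut = δ := rfl
  have hhOut : h.rOut = cc * δ := rfl
  -- bounds on bump derivatives
  obtain ⟨Cg0, hCg0⟩ := g.hasCompactSupport.deriv.exists_bound_of_continuous
    ((g.contDiff (n := 1)).continuous_deriv le_rfl)
  obtain ⟨Ch0, hCh0⟩ := h.hasCompactSupport.deriv.exists_bound_of_continuous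
    ((h.contDiff (n := 1)).continuous_deriv le_rfl)
  set Cg : ℝ := max Cg0 0 with hCgdef
  set Ch : ℝ := max Ch0 0 with hChdef
  have hCgnn : 0 ≤ Cg := le_max_right _ _
  have hChnn : 0 ≤ Ch := le_max_right _ _
  have hCg : ∀ y, |deriv (⇑g) y| ≤ Cg := fun y =>
    le_trans (by simpa using hCg0 y) (le_max_left _ _)
  have hCh : ∀ y, |deriv (⇑h) y| ≤ Ch := fun y =>
    le_trans (by simpa using hCh0 y) (le_max_left _ _)
  have habsg : ∀ y, |(⇑g) y| ≤ 1 := fun y => by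
    rw [abs_of_nonneg g.nonneg]; exact g.le_one
  have habsh : ∀ y, |(⇑h) y| ≤ 1 := fun y => by
    rw [abs_of_nonneg h.nonneg]; exact h.le_one
  have hM₁nn : 0 ≤ Cg + |l| * Ch := by positivity
  -- the piecewise-constant profile
  set Ub : ℝ × ℝ → EuclideanSpace ℝ (Fin n) :=
    fun p => if p.2 - ξ < l * (p.1 - τ) then um else up with hUbdef
  have hUbmeas : Measurable Ub := by
    apply Measurable.ite _ measurable_const measurable_const
    exact measurableSet_lt (by fun_prop) (by fun_prop)
  set KU : ℝ := ‖um‖ + ‖up‖ with hKUdef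
  have hKUnn : 0 ≤ KU := by positivity
  have hUb_bd : ∀ p, ‖Ub p‖ ≤ KU := by
    intro p
    by_cases hp : p.2 - ξ < l * (p.1 - τ) <;>
      simp only [hUbdef, hp, if_true, if_false, hKUdef] <;>
      [linarith [norm_nonneg up]; linarith [norm_nonneg um]]
  set K' : ℝ := K + KU with hK'def
  have huball : ∀ p, u p ∈ Metric.closedBall (0 : EuclideanSpace ℝ (Fin n)) K' := by
    intro p
    simp only [Metric.mem_closedBall, dist_zero_right]
    linarith [hbd p]
  have hUball : ∀ p, Ub p ∈ Metric.closedBall (0 : EuclideanSpace ℝ (Fin n)) K' := by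
    intro p
    simp only [Metric.mem_closedBall, dist_zero_right]
    linarith [hUb_bd p]
  obtain ⟨Mf0, hMf0⟩ := (isCompact_closedBall (0 : EuclideanSpace ℝ (Fin n)) K')
    |>.exists_bound_of_continuousOn hf.continuousOn
  set Mf : ℝ := max Mf0 0 with hMfdef
  have hMfnn : 0 ≤ Mf := le_max_right _ _
  have hMf : ∀ w ∈ Metric.closedBall (0 : EuclideanSpace ℝ (Fin n)) K', ‖f w‖ ≤ Mf :=
    fun w hw => le_trans (hMf0 w hw) (le_max_left _ _)
  set G0 : ℝ := ∫ x : ℝ, g x with hG0def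
  have hG0pos : 0 < G0 := g.integral_pos
  set v : EuclideanSpace ℝ (Fin n) := (f um - f up) - l • (um - up) with hvdef
  set r₀ : ℝ := min τ (T - τ) with hr₀def
  have hr₀pos : 0 < r₀ := lt_min hτ.1 (by linarith [hτ.2])
  set Jr : ℝ → ℝ := fun r => ∫ t in -r..r, ∫ x in -r..r,
      ‖u (τ + t, ξ + x) - (if x < l * t then um else up)‖ with hJrdef
  -- MAIN ESTIMATE
  have key : ∀ ε > (0:ℝ), ∃ C ≥ (0:ℝ), ∀ r ∈ Ioo (0:ℝ) r₀,
      (r^2 * G0) * ‖v‖ ≤ ((Cg + |l| * Ch) + Ch * C) * Jr r + Ch * ε * (4 * r^2) := by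
    intro ε hε
    obtain ⟨d, hd0, hdimp⟩ := Metric.uniformContinuousOn_iff.1
      ((isCompact_closedBall (0 : EuclideanSpace ℝ (Fin n)) K')
        |>.uniformContinuousOn_of_continuous hf.continuousOn) ε hε
    set C : ℝ := 2 * Mf / d with hCdef
    have hCnn : 0 ≤ C := by positivity
    refine ⟨C, hCnn, ?_⟩
    have hfdiff : ∀ p, ‖f (Ub p) - f (u p)‖ ≤ ε + C * ‖u p - Ub p‖ := by
      intro p
      by_cases hcase : dist (Ub p) (u p) < d
      · have h1 := hdimp (Ub p) (hUball p) (u p) (huball p) hcase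
        rw [dist_eq_norm] at h1
        have h2 : 0 ≤ C * ‖u p - Ub p‖ := by positivity
        linarith
      · have hge : d ≤ ‖u p - Ub p‖ := by
          rw [dist_eq_norm, norm_sub_rev] at hcase
          exact not_lt.1 hcase
        have h1 : ‖f (Ub p) - f (u p)‖ ≤ 2 * Mf := by
          calc ‖f (Ub p) - f (u p)‖ ≤ ‖f (Ub p)‖ + ‖f (u p)‖ := norm_sub_le _ _
          _ ≤ Mf + Mf := add_le_add (hMf _ (hUball p)) (hMf _ (huball p))
          _ = 2 * Mf := by ring
        have h2 : 2 * Mf = C * d := by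
          rw [hCdef]; field_simp
        have h3 : C * d ≤ C * ‖u p - Ub p‖ := by
          apply mul_le_mul_of_nonneg_left hge hCnn
        linarith
    rintro r ⟨hr, hrr₀⟩
    have hrne : r ≠ 0 := hr.ne'
    -- the test function and associated quantities
    set A : ℝ → ℝ := fun t => g ((t - τ) / r) with hAdef
    set A' : ℝ → ℝ := fun t => deriv (⇑g) ((t - τ) / r) with hA'def
    set B : ℝ × ℝ → ℝ := fun p => h ((p.2 - ξ - l * (p.1 - τ)) / r) with hBdef
    set B' : ℝ × ℝ → ℝ := fun p => deriv (⇑h) ((p.2 - ξ - l * (p.1 - τ)) / r) with hB'def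
    set φ : ℝ × ℝ → ℝ := fun p => r * (g ((p.1 - τ) / r) * h ((p.2 - ξ - l * (p.1 - τ)) / r))
      with hφdef
    set FU : ℝ × ℝ → EuclideanSpace ℝ (Fin n) := fun p =>
      (A' p.1 * B p - l * (A p.1 * B' p)) • Ub p + (A p.1 * B' p) • f (Ub p) with hFUdef
    set Fu : ℝ × ℝ → EuclideanSpace ℝ (Fin n) := fun p =>
      (A' p.1 * B p - l * (A p.1 * B' p)) • u p + (A p.1 * B' p) • f (u p) with hFudef
    -- continuity facts
    have hcontA : Continuous A := g.continuous.comp (by fun_prop)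
    have hcontA' : Continuous A' :=
      ((g.contDiff (n := 1)).continuous_deriv le_rfl).comp (by fun_prop)
    have hcontB : Continuous B := h.continuous.comp (by fun_prop)
    have hcontB' : Continuous B' :=
      ((h.contDiff (n := 1)).continuous_deriv le_rfl).comp (by fun_prop)
    -- vanishing of coefficients away from the box
    have hvan : ∀ p : ℝ × ℝ, (r ≤ |p.1 - τ| ∨ r ≤ |p.2 - ξ|) →
        (A' p.1 * B p - l * (A p.1 * B' p)) = 0 ∧ A p.1 * B' p = 0 := by
      rintro ⟨t, x⟩ hp
      by_cases hA1 : |t - τ| ≤ r * δ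
      · -- then x must be far
        have hx : r ≤ |x - ξ| := by
          rcases hp with hp | hp
          · exfalso
            have : r * δ < r * 1 := by
              apply mul_lt_mul_of_pos_left hδlt1 hr
            nlinarith
          · exact hp
        have hfar : cc * δ < |x - ξ - l * (t - τ)| / r := by
          rw [lt_div_iff₀ hr]
          have h1 : |x - ξ| - |l * (t - τ)| ≤ |x - ξ - l * (t - τ)| := by
            have := abs_sub_abs_le_abs_sub (x - ξ) (l * (t - τ))
            simpa using this
          have h2 : |l * (t - τ)| ≤ |l| * (r * δ) := by
            rw [abs_mul]
            exact mul_le_mul_of_nonneg_left hA1 (abs_nonneg l)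
          have h3 : (1 + 2 * |l|) * δ * r < 1 * r := by
            apply mul_lt_mul_of_pos_right _ hr
            simpa using hgeom
          simp only [hccdef]
          nlinarith
        have hB0 : B (t, x) = 0 := by
          apply bump_zero_of_out
          rw [hhOut, abs_div, abs_of_pos hr]
          exact le_of_lt hfar
        have hB'0 : B' (t, x) = 0 := by
          apply bump_deriv_zero_of_out
          rw [hhOut]
          rw [abs_div, abs_of_pos hr]
          exact hfar
        constructor <;> simp [hB0, hB'0]
      · push_neg at hA1
        have hfar : δ < |(t - τ) / r| := by
          rw [abs_div, abs_of_pos hr, lt_div_iff₀ hr]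
          nlinarith
        have hA0 : A t = 0 := by
          apply bump_zero_of_out
          rw [hgOut]; exact le_of_lt hfar
        have hA'0 : A' t = 0 := by
          apply bump_deriv_zero_of_out
          rw [hgOut]; exact hfar
        constructor <;> simp [hA0, hA'0]
    -- strengthened vanishing: also the product A*B vanishes
    have hvan3 : ∀ p : ℝ × ℝ, (r ≤ |p.1 - τ| ∨ r ≤ |p.2 - ξ|) →
        A' p.1 * B p = 0 ∧ A p.1 * B' p = 0 ∧ A p.1 * B p = 0 := by
      rintro ⟨t, x⟩ hp
      by_cases hA1 : |t - τ| ≤ r * δ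
      · have hx : r ≤ |x - ξ| := by
          rcases hp with hp | hp
          · exfalso
            have : r * δ < r * 1 := by
              apply mul_lt_mul_of_pos_left hδlt1 hr
            nlinarith
          · exact hp
        have hfar : cc * δ < |x - ξ - l * (t - τ)| / r := by
          rw [lt_div_iff₀ hr]
          have h1 : |x - ξ| - |l * (t - τ)| ≤ |x - ξ - l * (t - τ)| := by
            have := abs_sub_abs_le_abs_sub (x - ξ) (l * (t - τ))
            simpa using this
          have h2 : |l * (t - τ)| ≤ |l| * (r * δ) := by
            rw [abs_mul]
            exact mul_le_mul_of_nonneg_left hA1 (abs_nonneg l)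
          have h3 : (1 + 2 * |l|) * δ * r < 1 * r := by
            apply mul_lt_mul_of_pos_right _ hr
            simpa using hgeom
          simp only [hccdef]
          nlinarith
        have hB0 : B (t, x) = 0 := by
          apply bump_zero_of_out
          rw [hhOut, abs_div, abs_of_pos hr]
          exact le_of_lt hfar
        have hB'0 : B' (t, x) = 0 := by
          apply bump_deriv_zero_of_out
          rw [hhOut, abs_div, abs_of_pos hr]
          exact hfar
        refine ⟨by simp [hB0], by simp [hB'0], by simp [hB0]⟩
      · push_neg at hA1
        have hfar : δ < |(t - τ) / r| := by
          rw [abs_div, abs_of_pos hr, lt_div_iff₀ hr]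
          nlinarith
        have hA0 : A t = 0 := by
          apply bump_zero_of_out
          rw [hgOut]; exact le_of_lt hfar
        have hA'0 : A' t = 0 := by
          apply bump_deriv_zero_of_out
          rw [hgOut]; exact hfar
        refine ⟨by simp [hA'0], by simp [hA0], by simp [hA0]⟩
    -- complement of boxes gives the distance condition
    have hout_Icc : ∀ p : ℝ × ℝ, p ∉ (Icc (τ-r) (τ+r) ×ˢ Icc (ξ-r) (ξ+r)) →
        (r ≤ |p.1 - τ| ∨ r ≤ |p.2 - ξ|) := by
      rintro ⟨t, x⟩ hp
      by_contra hc
      push_neg at hc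
      obtain ⟨h1, h2⟩ := hc
      exact hp ⟨mem_Icc.2 ⟨by linarith [(abs_lt.1 h1).1], by linarith [(abs_lt.1 h1).2]⟩,
        mem_Icc.2 ⟨by linarith [(abs_lt.1 h2).1], by linarith [(abs_lt.1 h2).2]⟩⟩
    have hout_Ioc : ∀ p : ℝ × ℝ, p ∉ (Ioc (τ-r) (τ+r) ×ˢ Ioc (ξ-r) (ξ+r)) →
        (r ≤ |p.1 - τ| ∨ r ≤ |p.2 - ξ|) := by
      rintro ⟨t, x⟩ hp
      by_contra hc
      push_neg at hc
      obtain ⟨h1, h2⟩ := hc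
      exact hp ⟨mem_Ioc.2 ⟨by linarith [(abs_lt.1 h1).1], by linarith [(abs_lt.1 h1).2]⟩,
        mem_Ioc.2 ⟨by linarith [(abs_lt.1 h2).1], by linarith [(abs_lt.1 h2).2]⟩⟩
    -- φ is C¹
    have hφc : ContDiff ℝ 1 φ :=
      contDiff_const.mul
        (((g.contDiff (n := 1)).comp ((contDiff_fst.sub contDiff_const).div_const r)).mul
          ((h.contDiff (n := 1)).comp
            (((contDiff_snd.sub contDiff_const).sub
              (contDiff_const.mul (contDiff_fst.sub contDiff_const))).div_const r)))
    -- φ has compact support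
    have hφ0 : ∀ p : ℝ × ℝ, (r ≤ |p.1 - τ| ∨ r ≤ |p.2 - ξ|) → φ p = 0 := by
      intro p hp
      have h3 := (hvan3 p hp).2.2
      have : φ p = r * (A p.1 * B p) := rfl
      rw [this, h3, mul_zero]
    have hφcs : HasCompactSupport φ := by
      apply HasCompactSupport.intro (isCompact_Icc.prod isCompact_Icc :
        IsCompact ((Icc (τ-r) (τ+r)) ×ˢ (Icc (ξ-r) (ξ+r))))
      intro p hp
      exact hφ0 p (hout_Icc p hp)
    -- tsupport condition
    have hrτ : r < τ := lt_of_lt_of_le hrr₀ (min_le_left _ _)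
    have hrT : r < T - τ := lt_of_lt_of_le hrr₀ (min_le_right _ _)
    have hφt : tsupport φ ⊆ Ioo 0 T ×ˢ (univ : Set ℝ) := by
      have hsub : Function.support φ ⊆ Icc (τ - r*δ) (τ + r*δ) ×ˢ (univ : Set ℝ) := by
        rintro ⟨t, x⟩ hp
        by_contra hout
        apply hp
        have ht : ¬ |t - τ| ≤ r * δ := by
          intro habs
          apply hout
          refine ⟨mem_Icc.2 ⟨by linarith [(abs_le.1 habs).1], by linarith [(abs_le.1 habs).2]⟩,
            mem_univ _⟩
        push_neg at ht
        have hfar : δ < |(t - τ) / r| := by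
          rw [abs_div, abs_of_pos hr, lt_div_iff₀ hr]
          nlinarith
        have hA0 : A t = 0 := by
          apply bump_zero_of_out
          rw [hgOut]; exact le_of_lt hfar
        have : φ (t, x) = r * (A t * B (t, x)) := rfl
        rw [this, hA0, zero_mul, mul_zero]
      have hclosed : IsClosed (Icc (τ - r*δ) (τ + r*δ) ×ˢ (univ : Set ℝ)) :=
        isClosed_Icc.prod isClosed_univ
      have h1 : tsupport φ ⊆ Icc (τ - r*δ) (τ + r*δ) ×ˢ (univ : Set ℝ) :=
        closure_minimal hsub hclosed
      refine h1.trans ?_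
      apply prod_mono _ subset_rfl
      intro z hz
      rw [mem_Icc] at hz
      have hrδ : r * δ < r := by nlinarith
      exact ⟨by linarith [hτ.1, hz.1], by linarith [hτ.2, hz.2]⟩
    -- derivatives of φ
    have hd1 : ∀ p : ℝ × ℝ, HasDerivAt (fun s => φ (s, p.2))
        (A' p.1 * B p - l * (A p.1 * B' p)) p.1 := by
      rintro ⟨t, x⟩
      have hgd : HasDerivAt (fun s : ℝ => g ((s - τ) / r))
          (deriv (⇑g) ((t - τ)/r) * (1/r)) t := by
        have hi : HasDerivAt (fun s : ℝ => (s - τ) / r) (1/r) t := by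
          simpa using ((hasDerivAt_id t).sub_const τ).div_const r
        exact (((g.contDiff (n := 1)).differentiable (by norm_num) _).hasDerivAt).comp t hi
      have hhd : HasDerivAt (fun s : ℝ => h ((x - ξ - l * (s - τ)) / r))
          (deriv (⇑h) ((x - ξ - l * (t - τ))/r) * (-l/r)) t := by
        have hi : HasDerivAt (fun s : ℝ => (x - ξ - l * (s - τ)) / r) (-l/r) t := by
          have h2 : HasDerivAt (fun s : ℝ => x - ξ - l * (s - τ)) (-l) t := by
            simpa using (((hasDerivAt_id t).sub_const τ).const_mul l).const_sub (x - ξ)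
          simpa using h2.div_const r
        exact (((h.contDiff (n := 1)).differentiable (by norm_num) _).hasDerivAt).comp t hi
      have hres := (hgd.mul hhd).const_mul r
      convert hres using 1
      show A' t * B (t, x) - l * (A t * B' (t, x)) = r * (_ * _ + _ * _)
      simp only [hAdef, hA'def, hBdef, hB'def]
      field_simp
      ring
      all_goals rfl
    have hd2 : ∀ p : ℝ × ℝ, HasDerivAt (fun y => φ (p.1, y)) (A p.1 * B' p) p.2 := by
      rintro ⟨t, x⟩
      have hhd : HasDerivAt (fun y : ℝ => h ((y - ξ - l * (t - τ)) / r))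
          (deriv (⇑h) ((x - ξ - l * (t - τ))/r) * (1/r)) x := by
        have hi : HasDerivAt (fun y : ℝ => (y - ξ - l * (t - τ)) / r) (1/r) x := by
          have h2 : HasDerivAt (fun y : ℝ => y - ξ - l * (t - τ)) 1 x := by
            simpa using ((hasDerivAt_id x).sub_const ξ).sub_const (l * (t - τ))
          simpa using h2.div_const r
        exact (((h.contDiff (n := 1)).differentiable (by norm_num) _).hasDerivAt).comp x hi
      have hres := (hhd.const_mul (g ((t - τ)/r))).const_mul r
      convert hres using 1
      show A t * B' (t, x) = r * (_ * _)
      simp only [hAdef, hBdef, hB'def]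
      field_simp
      all_goals rfl
    -- weak formulation applied to φ
    have h0 : ∫ p : ℝ × ℝ, Fu p = 0 := by
      rw [← hweak φ hφc hφcs hφt]
      apply integral_congr_ae (ae_of_all _ _)
      intro p
      rw [(hd1 p).deriv, (hd2 p).deriv]
    -- measurability
    have hmeasFU : AEStronglyMeasurable FU (volume : Measure (ℝ × ℝ)) := by
      apply Measurable.aestronglyMeasurable
      apply Measurable.add
      · exact (((hcontA'.comp continuous_fst).mul hcontB).sub
          (continuous_const.mul ((hcontA.comp continuous_fst).mul hcontB'))).measurable.smul
          hUbmeas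
      · exact ((hcontA.comp continuous_fst).mul hcontB').measurable.smul
          (hf.measurable.comp hUbmeas)
    have hmeasFu : AEStronglyMeasurable Fu (volume : Measure (ℝ × ℝ)) := by
      apply Measurable.aestronglyMeasurable
      apply Measurable.add
      · exact (((hcontA'.comp continuous_fst).mul hcontB).sub
          (continuous_const.mul ((hcontA.comp continuous_fst).mul hcontB'))).measurable.smul
          hmeas
      · exact ((hcontA.comp continuous_fst).mul hcontB').measurable.smul
          (hf.measurable.comp hmeas)
    -- coefficient bounds
    have hcoef1 : ∀ p : ℝ × ℝ, |A' p.1 * B p - l * (A p.1 * B' p)| ≤ Cg + |l| * Ch := by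
      intro p
      have e1 : |A' p.1 * B p - l * (A p.1 * B' p)|
          ≤ |A' p.1| * |B p| + |l| * (|A p.1| * |B' p|) := by
        calc |A' p.1 * B p - l * (A p.1 * B' p)|
            ≤ |A' p.1 * B p| + |l * (A p.1 * B' p)| := abs_sub _ _
        _ = |A' p.1| * |B p| + |l| * (|A p.1| * |B' p|) := by
            rw [abs_mul, abs_mul, abs_mul]
      have b1 : |A' p.1| ≤ Cg := hCg _
      have b2 : |B p| ≤ 1 := habsh _
      have b3 : |A p.1| ≤ 1 := habsg _
      have b4 : |B' p| ≤ Ch := hCh _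
      have n1 : (0:ℝ) ≤ |A' p.1| := abs_nonneg _
      have n2 : (0:ℝ) ≤ |B p| := abs_nonneg _
      have n3 : (0:ℝ) ≤ |A p.1| := abs_nonneg _
      have n4 : (0:ℝ) ≤ |B' p| := abs_nonneg _
      have n5 : (0:ℝ) ≤ |l| := abs_nonneg _
      have t1 : |A' p.1| * |B p| ≤ Cg * 1 := mul_le_mul b1 b2 n2 hCgnn
      have t2 : |A p.1| * |B' p| ≤ 1 * Ch := mul_le_mul b3 b4 n4 zero_le_one
      have t3 : |l| * (|A p.1| * |B' p|) ≤ |l| * (1 * Ch) :=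
        mul_le_mul_of_nonneg_left t2 n5
      linarith
    have hcoef2 : ∀ p : ℝ × ℝ, |A p.1 * B' p| ≤ Ch := by
      intro p
      rw [abs_mul]
      have b3 : |A p.1| ≤ 1 := habsg _
      have b4 : |B' p| ≤ Ch := hCh _
      have := mul_le_mul b3 b4 (abs_nonneg _) zero_le_one
      linarith
    -- norm bounds
    have hFUbd : ∀ p, ‖FU p‖ ≤ (Cg + |l| * Ch) * K' + Ch * Mf := by
      intro p
      calc ‖FU p‖ ≤ ‖(A' p.1 * B p - l * (A p.1 * B' p)) • Ub p‖
            + ‖(A p.1 * B' p) • f (Ub p)‖ := norm_add_le _ _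
      _ = |A' p.1 * B p - l * (A p.1 * B' p)| * ‖Ub p‖ + |A p.1 * B' p| * ‖f (Ub p)‖ := by
          rw [norm_smul, norm_smul, Real.norm_eq_abs, Real.norm_eq_abs]
      _ ≤ (Cg + |l| * Ch) * K' + Ch * Mf := by
          have c1 := hcoef1 p
          have c2 := hcoef2 p
          have c3 : ‖Ub p‖ ≤ K' := by
            have := hUb_bd p; rw [hK'def]; linarith
          have c4 : ‖f (Ub p)‖ ≤ Mf := hMf _ (hUball p)
          have t1 := mul_le_mul c1 c3 (norm_nonneg _) hM₁nn
          have t2 := mul_le_mul c2 c4 (norm_nonneg _) hChnn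
          linarith
    have hFubd : ∀ p, ‖Fu p‖ ≤ (Cg + |l| * Ch) * K' + Ch * Mf := by
      intro p
      calc ‖Fu p‖ ≤ ‖(A' p.1 * B p - l * (A p.1 * B' p)) • u p‖
            + ‖(A p.1 * B' p) • f (u p)‖ := norm_add_le _ _
      _ = |A' p.1 * B p - l * (A p.1 * B' p)| * ‖u p‖ + |A p.1 * B' p| * ‖f (u p)‖ := by
          rw [norm_smul, norm_smul, Real.norm_eq_abs, Real.norm_eq_abs]
      _ ≤ (Cg + |l| * Ch) * K' + Ch * Mf := by
          have c1 := hcoef1 p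
          have c2 := hcoef2 p
          have c3 : ‖u p‖ ≤ K' := by
            have := hbd p; rw [hK'def]; linarith
          have c4 : ‖f (u p)‖ ≤ Mf := hMf _ (huball p)
          have t1 := mul_le_mul c1 c3 (norm_nonneg _) hM₁nn
          have t2 := mul_le_mul c2 c4 (norm_nonneg _) hChnn
          linarith
    -- vanishing outside a box
    have hFU0 : ∀ p : ℝ × ℝ, p ∉ (Icc (τ-r) (τ+r) ×ˢ Icc (ξ-r) (ξ+r)) → FU p = 0 := by
      intro p hp
      obtain ⟨hz1, hz2, _⟩ := hvan3 p (hout_Icc p hp)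
      have hc1 : A' p.1 * B p - l * (A p.1 * B' p) = 0 := by rw [hz1, hz2]; ring
      show (A' p.1 * B p - l * (A p.1 * B' p)) • Ub p + (A p.1 * B' p) • f (Ub p) = 0
      rw [hc1, hz2, zero_smul, zero_smul, add_zero]
    have hFu0 : ∀ p : ℝ × ℝ, p ∉ (Icc (τ-r) (τ+r) ×ˢ Icc (ξ-r) (ξ+r)) → Fu p = 0 := by
      intro p hp
      obtain ⟨hz1, hz2, _⟩ := hvan3 p (hout_Icc p hp)
      have hc1 : A' p.1 * B p - l * (A p.1 * B' p) = 0 := by rw [hz1, hz2]; ring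
      show (A' p.1 * B p - l * (A p.1 * B' p)) • u p + (A p.1 * B' p) • f (u p) = 0
      rw [hc1, hz2, zero_smul, zero_smul, add_zero]
    have hboxfin : (volume : Measure (ℝ × ℝ)) ((Icc (τ-r) (τ+r)) ×ˢ (Icc (ξ-r) (ξ+r))) ≠ ⊤ :=
      (isCompact_Icc.prod isCompact_Icc).measure_lt_top.ne
    have hIntFU : Integrable FU (volume : Measure (ℝ × ℝ)) :=
      integrable_of_bdd_supp hmeasFU (measurableSet_Icc.prod measurableSet_Icc)
        hboxfin hFU0 hFUbd
    have hIntFu : Integrable Fu (volume : Measure (ℝ × ℝ)) :=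
      integrable_of_bdd_supp hmeasFu (measurableSet_Icc.prod measurableSet_Icc)
        hboxfin hFu0 hFubd
    -- value of the profile integral
    have hAcs : HasCompactSupport A := by
      apply HasCompactSupport.intro (isCompact_Icc : IsCompact (Icc (τ - r*δ) (τ + r*δ)))
      intro t ht
      have ht' : ¬ |t - τ| ≤ r * δ := by
        intro habs
        exact ht (mem_Icc.2 ⟨by linarith [(abs_le.1 habs).1], by linarith [(abs_le.1 habs).2]⟩)
      push_neg at ht'
      apply bump_zero_of_out
      rw [hgOut, abs_div, abs_of_pos hr, le_div_iff₀ hr]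
      nlinarith
    have hA'cs : HasCompactSupport A' := by
      apply HasCompactSupport.intro (isCompact_Icc : IsCompact (Icc (τ - r*δ) (τ + r*δ)))
      intro t ht
      have ht' : ¬ |t - τ| ≤ r * δ := by
        intro habs
        exact ht (mem_Icc.2 ⟨by linarith [(abs_le.1 habs).1], by linarith [(abs_le.1 habs).2]⟩)
      push_neg at ht'
      apply bump_deriv_zero_of_out
      rw [hgOut, abs_div, abs_of_pos hr, lt_div_iff₀ hr]
      nlinarith
    have hIntA : Integrable A := hcontA.integrable_of_hasCompactSupport hAcs
    have hIntA' : Integrable A' := hcontA'.integrable_of_hasCompactSupport hA'cs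
    set W1 : EuclideanSpace ℝ (Fin n) :=
      (∫ x in Iio (0:ℝ), h (x / r)) • um + (∫ x in Ici (0:ℝ), h (x / r)) • up with hW1def
    have hinner : ∀ t : ℝ, (∫ x : ℝ, FU (t, x)) = A' t • W1 + A t • (r • v) := by
      intro t
      set ct : ℝ := ξ + l * (t - τ) with hctdef
      have hUbt : ∀ x : ℝ, Ub (t, x) = if x < ct then um else up := by
        intro x
        show (if x - ξ < l * (t - τ) then um else up) = if x < ct then um else up
        congr 1
        apply propext
        rw [hctdef]
        constructor <;> intro hx <;> linarith
      set e1 : ℝ → EuclideanSpace ℝ (Fin n) := fun x => h ((x - ct) / r) • Ub (t, x) with he1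
      set e2 : ℝ → EuclideanSpace ℝ (Fin n) :=
        fun x => deriv (⇑h) ((x - ct) / r) • (f (Ub (t, x)) - l • Ub (t, x)) with he2
      have hBt : ∀ x : ℝ, B (t, x) = h ((x - ct) / r) := by
        intro x
        show h ((x - ξ - l * (t - τ)) / r) = h ((x - ct) / r)
        congr 1
        rw [hctdef]; ring
      have hB't : ∀ x : ℝ, B' (t, x) = deriv (⇑h) ((x - ct) / r) := by
        intro x
        show deriv (⇑h) ((x - ξ - l * (t - τ)) / r) = deriv (⇑h) ((x - ct) / r)
        congr 1
        rw [hctdef]; ring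
      have hsplit : ∀ x : ℝ, FU (t, x) = A' t • e1 x + A t • e2 x := by
        intro x
        show (A' t * B (t,x) - l * (A t * B' (t,x))) • Ub (t,x)
            + (A t * B' (t,x)) • f (Ub (t,x))
            = A' t • (h ((x - ct) / r) • Ub (t, x))
            + A t • (deriv (⇑h) ((x - ct) / r) • (f (Ub (t, x)) - l • Ub (t, x)))
        rw [hBt x, hB't x]
        module
      -- integrability of the slices
      have hmeasUbx : Measurable fun x : ℝ => Ub (t, x) :=
        hUbmeas.comp (measurable_const.prodMk measurable_id)
      have hmeas1 : AEStronglyMeasurable e1 volume := by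
        apply Measurable.aestronglyMeasurable
        exact ((h.continuous.comp ((continuous_id.sub continuous_const).div_const r)).measurable).smul hmeasUbx
      have hmeas2 : AEStronglyMeasurable e2 volume := by
        apply Measurable.aestronglyMeasurable
        refine Measurable.smul (f := fun x => deriv (⇑h) ((x - ct) / r))
          (g := fun x => f (Ub (t, x)) - l • Ub (t, x)) ?_ ?_
        · exact (((h.contDiff (n := 1)).continuous_deriv le_rfl).comp
            ((continuous_id.sub continuous_const).div_const r)).measurable
        · exact ((hf.measurable.comp hmeasUbx).sub (hmeasUbx.const_smul l))
      have hsupp12 : ∀ x : ℝ, x ∉ Icc (ct - r * h.rOut) (ct + r * h.rOut) →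
          (h ((x - ct)/r) = 0 ∧ deriv (⇑h) ((x - ct)/r) = 0) := by
        intro x hx
        have hx' : r * h.rOut < |x - ct| := by
          by_contra hcon
          push_neg at hcon
          exact hx (mem_Icc.2 ⟨by linarith [(abs_le.1 hcon).1], by linarith [(abs_le.1 hcon).2]⟩)
        have hfar : h.rOut < |(x - ct)/r| := by
          rw [abs_div, abs_of_pos hr, lt_div_iff₀ hr]
          nlinarith [h.rIn_pos.trans h.rIn_lt_rOut]
        exact ⟨bump_zero_of_out h (le_of_lt hfar), bump_deriv_zero_of_out h hfar⟩
      have hint1 : Integrable e1 := by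
        apply integrable_of_bdd_supp hmeas1 measurableSet_Icc
          (isCompact_Icc.measure_lt_top).ne
          (fun x hx => by rw [he1]; simp only; rw [(hsupp12 x hx).1, zero_smul])
          (C := 1 * KU)
        intro x
        rw [he1]; simp only [norm_smul, Real.norm_eq_abs]
        exact mul_le_mul (habsh _) (hUb_bd _) (norm_nonneg _) zero_le_one
      have hint2 : Integrable e2 := by
        apply integrable_of_bdd_supp hmeas2 measurableSet_Icc
          (isCompact_Icc.measure_lt_top).ne
          (fun x hx => by rw [he2]; simp only; rw [(hsupp12 x hx).2, zero_smul])
          (C := Ch * (Mf + |l| * KU))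
        intro x
        rw [he2]; simp only [norm_smul, Real.norm_eq_abs]
        apply mul_le_mul (hCh _) _ (norm_nonneg _) hChnn
        calc ‖f (Ub (t,x)) - l • Ub (t,x)‖ ≤ ‖f (Ub (t,x))‖ + ‖l • Ub (t,x)‖ := norm_sub_le _ _
        _ ≤ Mf + |l| * KU := by
            rw [norm_smul, Real.norm_eq_abs]
            have := hMf _ (hUball (t,x))
            have := mul_le_mul_of_nonneg_left (hUb_bd (t,x)) (abs_nonneg l)
            linarith
      -- identify the two integrals
      have hpreIio : ((fun x : ℝ => x + ct) ⁻¹' Iio ct) = Iio 0 := by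
        ext x; simp
      have hpreIci : ((fun x : ℝ => x + ct) ⁻¹' Ici ct) = Ici 0 := by
        ext x; simp
      have hie1 : ∫ x, e1 x = W1 := by
        rw [← intervalIntegral.integral_Iio_add_Ici (b := ct)
          hint1.integrableOn hint1.integrableOn]
        have hlft : ∫ x in Iio ct, e1 x = (∫ x in Iio (0:ℝ), h (x / r)) • um := by
          have hEq : EqOn e1 (fun x => h ((x - ct)/r) • um) (Iio ct) := by
            intro x hx
            rw [he1]; simp only
            rw [hUbt x, if_pos (mem_Iio.1 hx)]
          rw [setIntegral_congr_fun measurableSet_Iio hEq, integral_smul_const]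
          congr 1
          rw [shift_setIntegral (fun x => h ((x - ct)/r)) ct (Iio ct), hpreIio]
          apply setIntegral_congr_fun measurableSet_Iio
          intro x _
          congr 1
          ring
        have hrgt : ∫ x in Ici ct, e1 x = (∫ x in Ici (0:ℝ), h (x / r)) • up := by
          have hEq : EqOn e1 (fun x => h ((x - ct)/r) • up) (Ici ct) := by
            intro x hx
            rw [he1]; simp only
            rw [hUbt x, if_neg (not_lt.2 (mem_Ici.1 hx))]
          rw [setIntegral_congr_fun measurableSet_Ici hEq, integral_smul_const]
          congr 1
          rw [shift_setIntegral (fun x => h ((x - ct)/r)) ct (Ici ct), hpreIci]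
          apply setIntegral_congr_fun measurableSet_Ici
          intro x _
          congr 1
          ring
        rw [hlft, hrgt, hW1def]
      have hsc1 : ∫ x in Iio ct, deriv (⇑h) ((x - ct)/r) = r := by
        rw [shift_setIntegral (fun x => deriv (⇑h) ((x - ct)/r)) ct (Iio ct), hpreIio]
        have hEq : EqOn (fun x : ℝ => deriv (⇑h) ((x + ct - ct)/r))
            (fun x : ℝ => deriv (⇑h) (x/r)) (Iio 0) := by
          intro x _
          simp only
          congr 1
          ring
        rw [setIntegral_congr_fun measurableSet_Iio hEq, integral_Iio_deriv_bump h hr]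
      have hsc2 : ∫ x in Ici ct, deriv (⇑h) ((x - ct)/r) = -r := by
        rw [shift_setIntegral (fun x => deriv (⇑h) ((x - ct)/r)) ct (Ici ct), hpreIci]
        have hEq : EqOn (fun x : ℝ => deriv (⇑h) ((x + ct - ct)/r))
            (fun x : ℝ => deriv (⇑h) (x/r)) (Ici 0) := by
          intro x _
          simp only
          congr 1
          ring
        rw [setIntegral_congr_fun measurableSet_Ici hEq, integral_Ici_deriv_bump h hr]
      have hie2 : ∫ x, e2 x = r • v := by
        rw [← intervalIntegral.integral_Iio_add_Ici (b := ct)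
          hint2.integrableOn hint2.integrableOn]
        have hlft : ∫ x in Iio ct, e2 x = (∫ x in Iio ct, deriv (⇑h) ((x - ct)/r)) • (f um - l • um) := by
          have hEq : EqOn e2 (fun x => deriv (⇑h) ((x - ct)/r) • (f um - l • um)) (Iio ct) := by
            intro x hx
            rw [he2]; simp only
            rw [hUbt x, if_pos (mem_Iio.1 hx)]
          rw [setIntegral_congr_fun measurableSet_Iio hEq, integral_smul_const]
        have hrgt : ∫ x in Ici ct, e2 x = (∫ x in Ici ct, deriv (⇑h) ((x - ct)/r)) • (f up - l • up) := by
          have hEq : EqOn e2 (fun x => deriv (⇑h) ((x - ct)/r) • (f up - l • up)) (Ici ct) := by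
            intro x hx
            rw [he2]; simp only
            rw [hUbt x, if_neg (not_lt.2 (mem_Ici.1 hx))]
          rw [setIntegral_congr_fun measurableSet_Ici hEq, integral_smul_const]
        rw [hlft, hrgt, hsc1, hsc2, hvdef]
        module
      calc ∫ x : ℝ, FU (t, x) = ∫ x : ℝ, (A' t • e1 x + A t • e2 x) :=
            integral_congr_ae (ae_of_all _ fun x => hsplit x)
      _ = A' t • (∫ x, e1 x) + A t • (∫ x, e2 x) := by
            have i1 : Integrable (fun x => A' t • e1 x) volume := hint1.smul (A' t)
            have i2 : Integrable (fun x => A t • e2 x) volume := hint2.smul (A t)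
            rw [integral_add i1 i2, integral_smul, integral_smul]
      _ = A' t • W1 + A t • (r • v) := by rw [hie1, hie2]
    have hFUval : ∫ p : ℝ × ℝ, FU p = (r^2 * G0) • v := by
      have hprod : (volume : Measure (ℝ × ℝ)) = (volume : Measure ℝ).prod volume :=
        Measure.volume_eq_prod ℝ ℝ
      rw [show (∫ p : ℝ × ℝ, FU p) = ∫ p : ℝ × ℝ, FU p ∂((volume : Measure ℝ).prod volume) by
        rw [← hprod]]
      rw [integral_prod _ (by rw [← hprod]; exact hIntFU)]
      calc ∫ t : ℝ, ∫ x : ℝ, FU (t, x)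
          = ∫ t : ℝ, (A' t • W1 + A t • (r • v)) :=
            integral_congr_ae (ae_of_all _ hinner)
      _ = (∫ t : ℝ, A' t) • W1 + (∫ t : ℝ, A t) • (r • v) := by
            rw [integral_add (hIntA'.smul_const W1) (hIntA.smul_const (r • v)),
              integral_smul_const, integral_smul_const]
      _ = (r^2 * G0) • v := by
            have hz : ∫ t : ℝ, A' t = 0 := integral_deriv_bump_shift g hr τ
            have hA : ∫ t : ℝ, A t = r * G0 := by
              rw [hG0def]; exact integral_bump_shift g hr τ
            rw [hz, hA, zero_smul, zero_add, smul_smul]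
            congr 1
            ring
    -- comparison with the actual solution
    set Rset : Set (ℝ × ℝ) := Ioc (τ-r) (τ+r) ×ˢ Ioc (ξ-r) (ξ+r) with hRdef
    have hRmeas : MeasurableSet Rset := measurableSet_Ioc.prod measurableSet_Ioc
    have hRvol : (volume : Measure (ℝ × ℝ)) Rset
        = ENNReal.ofReal (2*r) * ENNReal.ofReal (2*r) := by
      rw [hRdef, Measure.volume_eq_prod ℝ ℝ, Measure.prod_prod, Real.volume_Ioc, Real.volume_Ioc]
      congr 1 <;> · congr 1; ring
    have hRvolR : ((volume : Measure (ℝ × ℝ)) Rset).toReal = 4 * r^2 := by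
      have h2r : (0:ℝ) ≤ 2*r := by positivity
      rw [hRvol, ENNReal.toReal_mul, ENNReal.toReal_ofReal h2r]
      ring
    have hRfin : (volume : Measure (ℝ × ℝ)) Rset < ⊤ := by
      rw [hRvol]
      exact ENNReal.mul_lt_top ENNReal.ofReal_lt_top ENNReal.ofReal_lt_top
    set bfun : ℝ × ℝ → ℝ :=
      fun p => ((Cg + |l| * Ch) + Ch * C) * ‖u p - Ub p‖ + Ch * ε with hbfundef
    have hpt : ∀ p, ‖FU p - Fu p‖ ≤ Rset.indicator bfun p := by
      intro p
      by_cases hp : p ∈ Rset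
      · rw [indicator_of_mem hp]
        have hdiff : FU p - Fu p = (A' p.1 * B p - l * (A p.1 * B' p)) • (Ub p - u p)
            + (A p.1 * B' p) • (f (Ub p) - f (u p)) := by
          show ((A' p.1 * B p - l * (A p.1 * B' p)) • Ub p + (A p.1 * B' p) • f (Ub p))
            - ((A' p.1 * B p - l * (A p.1 * B' p)) • u p + (A p.1 * B' p) • f (u p)) = _
          module
        rw [hdiff, hbfundef]
        calc ‖(A' p.1 * B p - l * (A p.1 * B' p)) • (Ub p - u p)
              + (A p.1 * B' p) • (f (Ub p) - f (u p))‖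
            ≤ ‖(A' p.1 * B p - l * (A p.1 * B' p)) • (Ub p - u p)‖
              + ‖(A p.1 * B' p) • (f (Ub p) - f (u p))‖ := norm_add_le _ _
        _ = |A' p.1 * B p - l * (A p.1 * B' p)| * ‖Ub p - u p‖
              + |A p.1 * B' p| * ‖f (Ub p) - f (u p)‖ := by
            rw [norm_smul, norm_smul, Real.norm_eq_abs, Real.norm_eq_abs]
        _ ≤ ((Cg + |l| * Ch) + Ch * C) * ‖u p - Ub p‖ + Ch * ε := by
            have c1 := hcoef1 p
            have c2 := hcoef2 p
            have c3 := hfdiff p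
            have c4 : ‖Ub p - u p‖ = ‖u p - Ub p‖ := norm_sub_rev _ _
            rw [c4]
            have t1 : |A' p.1 * B p - l * (A p.1 * B' p)| * ‖u p - Ub p‖
                ≤ (Cg + |l| * Ch) * ‖u p - Ub p‖ :=
              mul_le_mul_of_nonneg_right c1 (norm_nonneg _)
            have t2 : |A p.1 * B' p| * ‖f (Ub p) - f (u p)‖
                ≤ Ch * (ε + C * ‖u p - Ub p‖) :=
              mul_le_mul c2 c3 (norm_nonneg _) hChnn
            have : Ch * (ε + C * ‖u p - Ub p‖) = Ch * ε + (Ch * C) * ‖u p - Ub p‖ := by ring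
            rw [this] at t2
            linarith
      · rw [indicator_of_notMem hp]
        obtain ⟨hz1, hz2, _⟩ := hvan3 p (hout_Ioc p hp)
        have hc1 : A' p.1 * B p - l * (A p.1 * B' p) = 0 := by rw [hz1, hz2]; ring
        have e0 : FU p - Fu p = 0 := by
          show ((A' p.1 * B p - l * (A p.1 * B' p)) • Ub p + (A p.1 * B' p) • f (Ub p))
            - ((A' p.1 * B p - l * (A p.1 * B' p)) • u p + (A p.1 * B' p) • f (u p)) = 0
          rw [hc1, hz2]
          simp
        rw [e0, norm_zero]
    have hDmeas : AEStronglyMeasurable (fun p : ℝ × ℝ => ‖u p - Ub p‖)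
        (volume : Measure (ℝ × ℝ)) :=
      ((hmeas.sub hUbmeas).norm).aestronglyMeasurable
    have hDbd : ∀ p : ℝ × ℝ, ‖‖u p - Ub p‖‖ ≤ K + KU := by
      intro p
      rw [Real.norm_eq_abs, abs_of_nonneg (norm_nonneg _)]
      calc ‖u p - Ub p‖ ≤ ‖u p‖ + ‖Ub p‖ := norm_sub_le _ _
      _ ≤ K + KU := add_le_add (hbd p) (hUb_bd p)
    have hDint : IntegrableOn (fun p : ℝ × ℝ => ‖u p - Ub p‖) Rset :=
      integrableOn_of_bdd hDmeas hRfin.ne hDbd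
    have hbint : Integrable (Rset.indicator bfun) (volume : Measure (ℝ × ℝ)) := by
      rw [integrable_indicator_iff hRmeas]
      apply Integrable.add
      · exact hDint.const_mul _
      · refine integrableOn_const hRfin.ne
    have hbval : ∫ p : ℝ × ℝ, Rset.indicator bfun p
        = ((Cg + |l| * Ch) + Ch * C) * (∫ p in Rset, ‖u p - Ub p‖) + Ch * ε * (4 * r^2) := by
      rw [integral_indicator hRmeas, hbfundef]
      rw [integral_add (hDint.const_mul _) (integrableOn_const hRfin.ne)]
      rw [integral_const_mul, setIntegral_const, measureReal_def, hRvolR, smul_eq_mul]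
      ring
    -- identify the set integral with the iterated interval integral
    have hpreτ : ((fun t : ℝ => t + τ) ⁻¹' Ioc (τ-r) (τ+r)) = Ioc (-r) r := by
      ext z
      simp only [mem_preimage, mem_Ioc]
      constructor <;> rintro ⟨h1, h2⟩ <;> constructor <;> linarith
    have hpreξ : ((fun x : ℝ => x + ξ) ⁻¹' Ioc (ξ-r) (ξ+r)) = Ioc (-r) r := by
      ext z
      simp only [mem_preimage, mem_Ioc]
      constructor <;> rintro ⟨h1, h2⟩ <;> constructor <;> linarith
    have hJeq : ∫ p in Rset, ‖u p - Ub p‖ = Jr r := by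
      have hIntD2 : IntegrableOn (fun p : ℝ × ℝ => ‖u p - Ub p‖)
          (Ioc (τ-r) (τ+r) ×ˢ Ioc (ξ-r) (ξ+r))
          ((volume : Measure ℝ).prod (volume : Measure ℝ)) := by
        rw [← Measure.volume_eq_prod]
        exact hDint
      calc ∫ p in Rset, ‖u p - Ub p‖
          = ∫ t in Ioc (τ-r) (τ+r), ∫ x in Ioc (ξ-r) (ξ+r), ‖u (t, x) - Ub (t, x)‖ := by
            rw [hRdef, Measure.volume_eq_prod ℝ ℝ]
            exact setIntegral_prod _ hIntD2
      _ = ∫ t in Ioc (-r) r, ∫ x in Ioc (ξ-r) (ξ+r), ‖u (t + τ, x) - Ub (t + τ, x)‖ := by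
            rw [shift_setIntegral
              (fun t => ∫ x in Ioc (ξ-r) (ξ+r), ‖u (t, x) - Ub (t, x)‖) τ (Ioc (τ-r) (τ+r)),
              hpreτ]
      _ = ∫ t in Ioc (-r) r, ∫ x in Ioc (-r) r, ‖u (t + τ, x + ξ) - Ub (t + τ, x + ξ)‖ := by
            apply setIntegral_congr_fun measurableSet_Ioc
            intro t _
            simp only
            rw [shift_setIntegral
              (fun x => ‖u (t + τ, x) - Ub (t + τ, x)‖) ξ (Ioc (ξ-r) (ξ+r)), hpreξ]
      _ = ∫ t in Ioc (-r) r, ∫ x in Ioc (-r) r,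
            ‖u (τ + t, ξ + x) - (if x < l * t then um else up)‖ := by
            apply setIntegral_congr_fun measurableSet_Ioc
            intro t _
            apply setIntegral_congr_fun measurableSet_Ioc
            intro x _
            simp only
            have hU : Ub (t + τ, x + ξ) = if x < l * t then um else up := by
              show (if (t + τ, x + ξ).2 - ξ < l * ((t + τ, x + ξ).1 - τ) then um else up) = _
              have e1 : (t + τ, x + ξ).2 - ξ = x := by simp
              have e2 : l * ((t + τ, x + ξ).1 - τ) = l * t := by simp
              rw [e1, e2]
            rw [hU, add_comm t τ, add_comm x ξ]
      _ = Jr r := by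
            rw [hJrdef]
            simp only
            rw [intervalIntegral.integral_of_le (by linarith : -r ≤ r)]
            apply setIntegral_congr_fun measurableSet_Ioc
            intro t _
            simp only
            rw [intervalIntegral.integral_of_le (by linarith : -r ≤ r)]
    -- put the pieces together
    have hnormval : ‖(r^2 * G0) • v‖ = (r^2 * G0) * ‖v‖ := by
      rw [norm_smul, Real.norm_eq_abs, abs_of_nonneg (by positivity)]
    have hmain : (r^2 * G0) * ‖v‖
        ≤ ((Cg + |l| * Ch) + Ch * C) * (∫ p in Rset, ‖u p - Ub p‖) + Ch * ε * (4 * r^2) := by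
      rw [← hnormval, ← hFUval]
      have hsub : ∫ p : ℝ × ℝ, FU p = ∫ p : ℝ × ℝ, (FU p - Fu p) := by
        rw [integral_sub hIntFU hIntFu, h0, sub_zero]
      rw [hsub, ← hbval]
      exact norm_integral_le_of_norm_le hbint (ae_of_all _ hpt)
    rw [hJeq] at hmain
    exact hmain



  -- conclusion from the main estimate
  have hfin : ∀ ε > (0:ℝ), G0 * ‖v‖ ≤ (4 * Ch + 1) * ε := by
    intro ε hε
    obtain ⟨C, hC0, hkey⟩ := key ε hε
    set M : ℝ := (Cg + |l| * Ch) + Ch * C with hMdef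
    have hMnn : 0 ≤ M := add_nonneg hM₁nn (mul_nonneg hChnn hC0)
    have hεd : (0:ℝ) < ε / (M + 1) := by positivity
    have hev : ∀ᶠ ρ in 𝓝[>] (0:ℝ), ρ ∈ Ioo (0:ℝ) r₀ ∧ (ρ^2)⁻¹ * Jr ρ < ε / (M + 1) := by
      filter_upwards [Ioo_mem_nhdsGT_of_mem (left_mem_Ico.2 hr₀pos),
        hjump (Iio_mem_nhds hεd)] with ρ h1 h2
      exact ⟨h1, h2⟩
    obtain ⟨ρ, hρIoo, hρsmall⟩ := hev.exists
    have hρpos : 0 < ρ := hρIoo.1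
    have hρ2 : (0:ℝ) < ρ^2 := by positivity
    have hkeyρ := hkey ρ hρIoo
    have h4 : M * (ε / (M + 1)) ≤ ε := by
      rw [mul_comm, div_mul_eq_mul_div, div_le_iff₀ (by linarith : (0:ℝ) < M + 1)]
      nlinarith
    have hX : M * ((ρ^2)⁻¹ * Jr ρ) ≤ ε :=
      le_trans (mul_le_mul_of_nonneg_left hρsmall.le hMnn) h4
    have hre : Jr ρ = ρ^2 * ((ρ^2)⁻¹ * Jr ρ) := by field_simp
    have hJb : M * Jr ρ ≤ ρ^2 * ε := by
      rw [hre]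
      calc M * (ρ^2 * ((ρ^2)⁻¹ * Jr ρ)) = ρ^2 * (M * ((ρ^2)⁻¹ * Jr ρ)) := by ring
      _ ≤ ρ^2 * ε := mul_le_mul_of_nonneg_left hX hρ2.le
    have h6 : ρ^2 * (G0 * ‖v‖) ≤ ρ^2 * ((4 * Ch + 1) * ε) := by
      have e1 : ρ^2 * G0 * ‖v‖ = ρ^2 * (G0 * ‖v‖) := by ring
      have e2 : M * Jr ρ + Ch * ε * (4 * ρ^2) ≤ ρ^2 * ((4 * Ch + 1) * ε) := by
        have : Ch * ε * (4 * ρ^2) = ρ^2 * (4 * Ch * ε) := by ring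
        rw [this]
        nlinarith
      calc ρ^2 * (G0 * ‖v‖) = ρ^2 * G0 * ‖v‖ := by ring
      _ ≤ M * Jr ρ + Ch * ε * (4 * ρ^2) := hkeyρ
      _ ≤ ρ^2 * ((4 * Ch + 1) * ε) := e2
    exact le_of_mul_le_mul_left h6 hρ2
  have hv0 : v = 0 := by
    by_contra hne
    have hnv : 0 < ‖v‖ := norm_pos_iff.2 hne
    have hc1 : (0:ℝ) < 4 * Ch + 1 := by linarith
    have hpos : (0:ℝ) < G0 * ‖v‖ / (2 * (4 * Ch + 1)) := by positivity
    have := hfin _ hpos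
    have hG0v : 0 < G0 * ‖v‖ := mul_pos hG0pos hnv
    have : G0 * ‖v‖ ≤ G0 * ‖v‖ / 2 := by
      calc G0 * ‖v‖ ≤ (4 * Ch + 1) * (G0 * ‖v‖ / (2 * (4 * Ch + 1))) := this
      _ = G0 * ‖v‖ / 2 := by field_simp
    linarith
  have heq : f um - f up = l • (um - up) := by
    have h1 : (f um - f up) - l • (um - up) = 0 := by rw [← hvdef]; exact hv0
    exact sub_eq_zero.1 h1
  calc f up - f um = -(f um - f up) := (neg_sub _ _).symm
  _ = -(l • (um - up)) := by rw [heq]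
  _ = l • (up - um) := by rw [← smul_neg, neg_sub]
end

section
/- Let u ∈ L¹_loc(ℝ²;ℝⁿ), ε > 0, j ≥ 1, Λ > 0. Say a point (τ,ξ) ∈ ℝ² belongs to J' if there exist states u⁻ ≠ u⁺ with |u⁺ − u⁻| ≥ 1/k, a speed λ with |λ| ≤ Λ/2, such that, with U(t,x) = u⁻ for x < λt and u⁺ for x > λt, one has ∫_{B_r(τ,ξ)} |u(t,x) − U(t−τ, x−ξ)| dx dt ≤ ε r² for all 0 < r < 1/j, where ε = ε(k,Λ) is chosen so that the quantitative shift lower bound ∫_{B₁}|U₁ − U₂((·)+(τ_s,ξ_s))| ≥ 6ε holds for all admissible pairs U₁, U₂ and all unit shifts (τ_s,ξ_s) with |ξ_s| ≥ Λ|τ_s|. Then any two points (τ₁,ξ₁), (τ₂,ξ₂) ∈ J' with |(τ₁,ξ₁) − (τ₂,ξ₂)| < 1/(2j) satisfy |ξ₂ − ξ₁| ≤ Λ|τ₂ − τ₁|. -/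
open MeasureTheory Set Filter Topology Pointwise

/-- The open disk in the (t,x)-plane with center `c` and radius `ρ`. -/
def disk (c : ℝ × ℝ) (ρ : ℝ) : Set (ℝ × ℝ) :=
  {p | (p.1 - c.1)^2 + (p.2 - c.2)^2 < ρ^2}

lemma disk_meas (c : ℝ×ℝ) (ρ : ℝ) : MeasurableSet (disk c ρ) := by
  apply measurableSet_lt <;> fun_prop

lemma disk_smul (r : ℝ) (hr : 0 < r) : r • disk ((0:ℝ),(0:ℝ)) 1 = disk (0,0) r := by
  ext x
  rw [mem_smul_set_iff_inv_smul_mem₀ hr.ne']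
  simp only [disk, mem_setOf_eq, Prod.smul_fst, Prod.smul_snd, smul_eq_mul]
  constructor
  · intro h
    have := mul_lt_mul_of_pos_left h (by positivity : (0:ℝ) < r^2)
    calc (x.1 - 0)^2 + (x.2 - 0)^2 = r^2 * ((r⁻¹ * x.1 - 0)^2 + (r⁻¹*x.2 - 0)^2) := by
          field_simp
          ring
      _ < r^2 * 1^2 := this
      _ = r^2 := by ring
  · intro h
    have h2 : (0:ℝ) < (r^2)⁻¹ := by positivity
    have := mul_lt_mul_of_pos_left h h2
    calc (r⁻¹ * x.1 - 0)^2 + (r⁻¹*x.2 - 0)^2 = (r^2)⁻¹ * ((x.1-0)^2 + (x.2-0)^2) := by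
          field_simp
          ring
      _ < (r^2)⁻¹ * r^2 := this
      _ = 1^2 := by field_simp

lemma cov (f : ℝ×ℝ → ℝ) (c : ℝ×ℝ) {r : ℝ} (hr : 0 < r) :
    ∫ p in disk (0,0) 1, f (c + r • p) = (r^2)⁻¹ • ∫ y in disk c r, f y := by
  have h1 : ∫ p in disk (0,0) 1, (fun x => f (c + x)) (r • p)
      = (r ^ Module.finrank ℝ (ℝ×ℝ))⁻¹ • ∫ x in r • disk ((0:ℝ),(0:ℝ)) 1, f (c + x) := by
    simpa using Measure.setIntegral_comp_smul_of_pos volume (fun x => f (c + x)) (disk ((0:ℝ),(0:ℝ)) 1) hr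
  have hrank : Module.finrank ℝ (ℝ×ℝ) = 2 := by simp
  rw [hrank, disk_smul r hr] at h1
  have h2 : ∫ x in disk ((0:ℝ),(0:ℝ)) r, f (c + x) = ∫ y in disk c r, f y := by
    have hpre : (fun x => c + x) ⁻¹' disk c r = disk ((0:ℝ),(0:ℝ)) r := by
      ext x; simp [disk]
    rw [← hpre]
    exact (measurePreserving_add_left volume c).setIntegral_preimage_emb
      (measurableEmbedding_addLeft c) f (disk c r)
  rw [h1, h2]

lemma disk_subset_closedBall (c : ℝ×ℝ) (ρ : ℝ) :
    disk c ρ ⊆ Metric.closedBall c |ρ| := by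
  intro y hy
  simp only [disk, mem_setOf_eq] at hy
  rw [← sq_abs ρ] at hy
  have hρ : 0 ≤ |ρ| := abs_nonneg ρ
  have a1 : |y.1 - c.1| ≤ |ρ| := by nlinarith [abs_nonneg (y.1-c.1), sq_abs (y.1-c.1), sq_nonneg (y.2-c.2)]
  have a2 : |y.2 - c.2| ≤ |ρ| := by nlinarith [abs_nonneg (y.2-c.2), sq_abs (y.2-c.2), sq_nonneg (y.1-c.1)]
  rw [Metric.mem_closedBall, Prod.dist_eq]
  exact max_le (by simpa [Real.dist_eq]) (by simpa [Real.dist_eq])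

lemma disk_fin (c : ℝ×ℝ) (ρ : ℝ) : volume (disk c ρ) < ⊤ :=
  lt_of_le_of_lt (measure_mono (disk_subset_closedBall c ρ))
    (isCompact_closedBall c |ρ|).measure_lt_top

lemma disk_incl {q₁ q₂ : ℝ×ℝ} {r : ℝ} (hr : 0 < r)
    (hq : (q₁.1-q₂.1)^2 + (q₁.2-q₂.2)^2 = r^2) :
    disk q₁ r ⊆ disk q₂ (2*r) := by
  intro y hy
  simp only [disk, mem_setOf_eq] at hy ⊢
  set a := y.1 - q₁.1; set b := y.2 - q₁.2
  set c := q₁.1 - q₂.1; set d := q₁.2 - q₂.2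
  have e1 : y.1 - q₂.1 = a + c := by simp [a, c]
  have e2 : y.2 - q₂.2 = b + d := by simp [b, d]
  rw [e1, e2]
  nlinarith [sq_nonneg (a*d - b*c), sq_nonneg (a*c + b*d - r^2), mul_pos hr hr]

lemma integrableOn_jump {n : ℕ} (um up : EuclideanSpace ℝ (Fin n)) (l : ℝ) (q c : ℝ×ℝ) (ρ : ℝ) :
    IntegrableOn (fun y : ℝ×ℝ => if y.2 - q.2 < l * (y.1 - q.1) then um else up)
      (disk c ρ) volume := by
  have hmeas : Measurable (fun y : ℝ×ℝ => if y.2 - q.2 < l * (y.1 - q.1) then um else up) := by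
    apply Measurable.ite _ measurable_const measurable_const
    apply measurableSet_lt <;> fun_prop
  refine Integrable.mono' (g := fun _ => max ‖um‖ ‖up‖)
    (integrableOn_const (disk_fin c ρ).ne) hmeas.aestronglyMeasurable ?_
  · filter_upwards with y
    split_ifs
    · exact le_max_left _ _
    · exact le_max_right _ _

lemma integrableOn_u {n : ℕ} {u : ℝ×ℝ → EuclideanSpace ℝ (Fin n)}
    (hu : LocallyIntegrable u volume) (c : ℝ×ℝ) (ρ : ℝ) :
    IntegrableOn u (disk c ρ) volume :=
  (hu.integrableOn_isCompact (isCompact_closedBall c |ρ|)).mono_set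
    (disk_subset_closedBall c ρ)

/-- Nearby points of the set J' of uniform approximate jumps satisfy the Lipschitz
cone condition. -/
theorem stmt16 (n : ℕ) (Λ ε : ℝ) (hΛ : 0 < Λ) (hε : 0 < ε)
    (k j : ℕ) (hk : 1 ≤ k) (hj : 1 ≤ j)
    (u : ℝ × ℝ → EuclideanSpace ℝ (Fin n))
    (hu : LocallyIntegrable u volume)
    (hlower : ∀ (um₁ up₁ um₂ up₂ : EuclideanSpace ℝ (Fin n)) (l₁ l₂ : ℝ),
      (1:ℝ)/k ≤ ‖up₁ - um₁‖ → (1:ℝ)/k ≤ ‖up₂ - um₂‖ →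
      |l₁| ≤ Λ/2 → |l₂| ≤ Λ/2 →
      ∀ τs ξs : ℝ, τs^2 + ξs^2 = 1 → Λ * |τs| ≤ |ξs| →
        6 * ε ≤ ∫ p in disk (0, 0) 1,
          ‖(if p.2 < l₁ * p.1 then um₁ else up₁)
            - (if p.2 + ξs < l₂ * (p.1 + τs) then um₂ else up₂)‖)
    (J' : Set (ℝ × ℝ))
    (hJ' : ∀ q ∈ J', ∃ (um up : EuclideanSpace ℝ (Fin n)) (l : ℝ),
      um ≠ up ∧ (1:ℝ)/k ≤ ‖up - um‖ ∧ |l| ≤ Λ/2 ∧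
      ∀ r : ℝ, 0 < r → r < 1/j →
        ∫ p in disk q r,
          ‖u p - (if p.2 - q.2 < l * (p.1 - q.1) then um else up)‖ ≤ ε * r^2) :
    ∀ q₁ ∈ J', ∀ q₂ ∈ J',
      Real.sqrt ((q₁.1 - q₂.1)^2 + (q₁.2 - q₂.2)^2) < 1/(2*j) →
      |q₂.2 - q₁.2| ≤ Λ * |q₂.1 - q₁.1| := by
  intro q₁ hq₁ q₂ hq₂ hd
  by_contra hcon
  push_neg at hcon
  set r := Real.sqrt ((q₁.1 - q₂.1)^2 + (q₁.2 - q₂.2)^2) with hrdef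
  have hs0 : 0 ≤ (q₁.1 - q₂.1)^2 + (q₁.2 - q₂.2)^2 := by positivity
  have hr2 : r^2 = (q₁.1 - q₂.1)^2 + (q₁.2 - q₂.2)^2 := Real.sq_sqrt hs0
  have hxpos : 0 < |q₂.2 - q₁.2| := lt_of_le_of_lt (mul_nonneg hΛ.le (abs_nonneg _)) hcon
  have hne : q₂.2 - q₁.2 ≠ 0 := by
    intro h; rw [h] at hxpos; simp at hxpos
  have hsum : 0 < (q₁.1 - q₂.1)^2 + (q₁.2 - q₂.2)^2 := by
    have : 0 < (q₂.2 - q₁.2)^2 := by positivity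
    nlinarith [sq_nonneg (q₁.1 - q₂.1)]
  have hrpos : 0 < r := Real.sqrt_pos.2 hsum
  have hj1 : (1:ℝ) ≤ (j:ℝ) := by exact_mod_cast hj
  have hjpos : (0:ℝ) < j := by linarith
  have hrj : r < 1/(j:ℝ) := by
    refine lt_of_lt_of_le hd ?_
    rw [div_le_div_iff₀ (by linarith) hjpos]
    linarith
  have h2rj : 2*r < 1/(j:ℝ) := by
    have : 2*r < 2*(1/(2*(j:ℝ))) := by linarith
    calc 2*r < 2*(1/(2*(j:ℝ))) := this
      _ = 1/(j:ℝ) := by field_simp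
  set τs := (q₁.1 - q₂.1)/r with hτdef
  set ξs := (q₁.2 - q₂.2)/r with hξdef
  have hunit : τs^2 + ξs^2 = 1 := by
    rw [hτdef, hξdef]
    field_simp
    linarith [hr2]
  have habsr : |r| = r := abs_of_pos hrpos
  have hcone : Λ * |τs| ≤ |ξs| := by
    rw [hτdef, hξdef, abs_div, abs_div, habsr, ← mul_div_assoc]
    gcongr
    rw [abs_sub_comm q₁.1 q₂.1, abs_sub_comm q₁.2 q₂.2]
    exact hcon.le
  obtain ⟨um₁, up₁, l₁, hne₁, hk₁, hl₁, hint₁⟩ := hJ' q₁ hq₁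
  obtain ⟨um₂, up₂, l₂, hne₂, hk₂, hl₂, hint₂⟩ := hJ' q₂ hq₂
  have h6 := hlower um₁ up₁ um₂ up₂ l₁ l₂ hk₁ hk₂ hl₁ hl₂ τs ξs hunit hcone
  set f : ℝ×ℝ → ℝ := fun y =>
    ‖(if y.2 - q₁.2 < l₁*(y.1-q₁.1) then um₁ else up₁)
      - (if y.2 - q₂.2 < l₂*(y.1-q₂.1) then um₂ else up₂)‖ with hfdef
  have hrξ : r * ξs = q₁.2 - q₂.2 := by rw [hξdef]; field_simp
  have hrτ : r * τs = q₁.1 - q₂.1 := by rw [hτdef]; field_simp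
  have hfe : ∀ p : ℝ×ℝ,
      ‖(if p.2 < l₁ * p.1 then um₁ else up₁)
        - (if p.2 + ξs < l₂ * (p.1 + τs) then um₂ else up₂)‖ = f (q₁ + r • p) := by
    intro p
    have e1 : (q₁ + r • p).2 - q₁.2 = r * p.2 := by simp
    have e2 : (q₁ + r • p).1 - q₁.1 = r * p.1 := by simp
    have e3 : (q₁ + r • p).2 - q₂.2 = r * (p.2 + ξs) := by
      simp only [Prod.snd_add, Prod.smul_snd, smul_eq_mul]
      rw [mul_add, hrξ]; ring
    have e4 : (q₁ + r • p).1 - q₂.1 = r * (p.1 + τs) := by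
      simp only [Prod.fst_add, Prod.smul_fst, smul_eq_mul]
      rw [mul_add, hrτ]; ring
    have c1 : ((q₁ + r • p).2 - q₁.2 < l₁*((q₁ + r • p).1 - q₁.1)) ↔ (p.2 < l₁ * p.1) := by
      rw [e1, e2, show l₁ * (r * p.1) = r * (l₁ * p.1) by ring, mul_lt_mul_iff_right₀ hrpos]
    have c2 : ((q₁ + r • p).2 - q₂.2 < l₂*((q₁ + r • p).1 - q₂.1))
        ↔ (p.2 + ξs < l₂ * (p.1 + τs)) := by
      rw [e3, e4, show l₂ * (r * (p.1 + τs)) = r * (l₂ * (p.1 + τs)) by ring,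
        mul_lt_mul_iff_right₀ hrpos]
    rw [hfdef]
    simp only
    rw [if_congr c1 rfl rfl, if_congr c2 rfl rfl]
  have h6' : 6 * ε ≤ (r^2)⁻¹ • ∫ y in disk q₁ r, f y := by
    rw [← cov f q₁ hrpos]
    calc 6 * ε ≤ _ := h6
      _ = _ := setIntegral_congr_fun (disk_meas _ _) (fun p _ => hfe p)
  -- integrability
  have hU₁ := integrableOn_jump um₁ up₁ l₁ q₁ q₁ r
  have hU₂r := integrableOn_jump um₂ up₂ l₂ q₂ q₁ r
  have hU₂R := integrableOn_jump um₂ up₂ l₂ q₂ q₂ (2*r)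
  have hu₁ := integrableOn_u hu q₁ r
  have hu₂ := integrableOn_u hu q₂ (2*r)
  set g₁ : ℝ×ℝ → ℝ := fun y =>
    ‖u y - (if y.2 - q₁.2 < l₁*(y.1-q₁.1) then um₁ else up₁)‖ with hg₁def
  set g₂ : ℝ×ℝ → ℝ := fun y =>
    ‖u y - (if y.2 - q₂.2 < l₂*(y.1-q₂.1) then um₂ else up₂)‖ with hg₂def
  have hg₁int : IntegrableOn g₁ (disk q₁ r) volume := (hu₁.sub hU₁).norm
  have hg₂int : IntegrableOn g₂ (disk q₁ r) volume := ((integrableOn_u hu q₁ r).sub hU₂r).norm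
  have hg₂int' : IntegrableOn g₂ (disk q₂ (2*r)) volume := (hu₂.sub hU₂R).norm
  have hfint : IntegrableOn f (disk q₁ r) volume := (hU₁.sub hU₂r).norm
  have htri : ∫ y in disk q₁ r, f y ≤ (∫ y in disk q₁ r, g₁ y) + ∫ y in disk q₁ r, g₂ y := by
    rw [← integral_add hg₁int hg₂int]
    refine setIntegral_mono hfint (hg₁int.add hg₂int) ?_
    intro y
    calc f y ≤ ‖(if y.2 - q₁.2 < l₁*(y.1-q₁.1) then um₁ else up₁) - u y‖
          + ‖u y - (if y.2 - q₂.2 < l₂*(y.1-q₂.1) then um₂ else up₂)‖ :=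
        norm_sub_le_norm_sub_add_norm_sub _ _ _
      _ = g₁ y + g₂ y := by rw [norm_sub_rev]
  have hA : ∫ y in disk q₁ r, g₁ y ≤ ε * r^2 := hint₁ r hrpos hrj
  have hB : ∫ y in disk q₁ r, g₂ y ≤ ε * (2*r)^2 := by
    refine le_trans (setIntegral_mono_set hg₂int'
      (Filter.Eventually.of_forall (fun y => norm_nonneg _))
      (HasSubset.Subset.eventuallyLE (disk_incl hrpos hr2.symm))) ?_
    exact hint₂ (2*r) (by linarith) h2rj
  have hr2pos : (0:ℝ) < r^2 := by positivity
  have hfinal : (r^2)⁻¹ • ∫ y in disk q₁ r, f y ≤ 5 * ε := by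
    rw [smul_eq_mul]
    have hC : ∫ y in disk q₁ r, f y ≤ 5 * ε * r^2 := by nlinarith
    calc (r^2)⁻¹ * ∫ y in disk q₁ r, f y ≤ (r^2)⁻¹ * (5 * ε * r^2) := by
          exact mul_le_mul_of_nonneg_left hC (by positivity)
      _ = 5 * ε := by field_simp
  linarith [h6'.trans hfinal]
end
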